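/- Let K be a field of characteristic 2 and let f ∈ K[X] be a polynomial in one variable. In the polynomial ring K[X₀, X₁, X₂], the polynomial D = (X₀+X₁)(X₁+X₂)(X₀+X₂) divides the polynomial N_f = f(X₀) + f(X₁) + f(X₂) + f(X₀+X₁+X₂) (where f(P) denotes substitution of the polynomial P into f). -/
import Mathlib

open MvPolynomial

theorem aux2 (K : Type*) [Field K] [CharP K 2] (n : ℕ) :
    ((X 0 + X 1) * (X 1 + X 2) * (X 0 + X 2) : MvPolynomial (Fin 3) K) ∣
      ((X 0)^n + (X 1)^n + (X 2)^n + (X 0 + X 1 + X 2)^n) := by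
  set a : MvPolynomial (Fin 3) K := X 0 with ha'
  set b : MvPolynomial (Fin 3) K := X 1 with hb'
  set c : MvPolynomial (Fin 3) K := X 2 with hc'
  have h2 : (2 : MvPolynomial (Fin 3) K) = 0 := CharTwo.two_eq_zero
  induction n using Nat.strong_induction_on with
  | _ n ih =>
    rcases n with (_|_|_|_|m)
    · have : (a^0 + b^0 + c^0 + (a+b+c)^0 : MvPolynomial (Fin 3) K) = 0 := by
        linear_combination 2 * h2
      rw [this]; exact dvd_zero _
    · have : (a^1 + b^1 + c^1 + (a+b+c)^1 : MvPolynomial (Fin 3) K) = 0 := by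
        linear_combination (a+b+c) * h2
      rw [this]; exact dvd_zero _
    · have : (a^2 + b^2 + c^2 + (a+b+c)^2 : MvPolynomial (Fin 3) K) = 0 := by
        linear_combination (a^2+b^2+c^2+a*b+a*c+b*c) * h2
      rw [this]; exact dvd_zero _
    · have : (a^3 + b^3 + c^3 + (a+b+c)^3 : MvPolynomial (Fin 3) K)
          = (a+b)*(b+c)*(a+c) := by
        linear_combination (a^3+b^3+c^3+a^2*b+a*b^2+b^2*c+b*c^2+a^2*c+a*c^2+2*a*b*c) * h2
      rw [this]
    · set E2 : MvPolynomial (Fin 3) K := a*b+a*c+b*c+(a+b+c)^2 with hE2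
      set E3 : MvPolynomial (Fin 3) K := a*b*c + (a*b+a*c+b*c)*(a+b+c) with hE3
      set E4 : MvPolynomial (Fin 3) K := a*b*c*(a+b+c) with hE4
      have qa : a^4 = E2*a^2 + E3*a + E4 := by
        rw [hE2, hE3, hE4]
        linear_combination ((a+b+c)*a^3 - (a*b+a*c+b*c+(a+b+c)^2)*a^2 - a*b*c*(a+b+c)) * h2
      have qb : b^4 = E2*b^2 + E3*b + E4 := by
        rw [hE2, hE3, hE4]
        linear_combination ((a+b+c)*b^3 - (a*b+a*c+b*c+(a+b+c)^2)*b^2 - a*b*c*(a+b+c)) * h2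
      have qc : c^4 = E2*c^2 + E3*c + E4 := by
        rw [hE2, hE3, hE4]
        linear_combination ((a+b+c)*c^3 - (a*b+a*c+b*c+(a+b+c)^2)*c^2 - a*b*c*(a+b+c)) * h2
      have qd : (a+b+c)^4 = E2*(a+b+c)^2 + E3*(a+b+c) + E4 := by
        rw [hE2, hE3, hE4]
        linear_combination ((a+b+c)*(a+b+c)^3 - (a*b+a*c+b*c+(a+b+c)^2)*(a+b+c)^2 - a*b*c*(a+b+c)) * h2
      have key : a^(m+4) + b^(m+4) + c^(m+4) + (a+b+c)^(m+4)
          = E2*(a^(m+2)+b^(m+2)+c^(m+2)+(a+b+c)^(m+2))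
            + E3*(a^(m+1)+b^(m+1)+c^(m+1)+(a+b+c)^(m+1))
            + E4*(a^m+b^m+c^m+(a+b+c)^m) := by
        have ea : a^(m+4) = E2*a^(m+2) + E3*a^(m+1) + E4*a^m := by
          rw [pow_add, qa]; ring
        have eb : b^(m+4) = E2*b^(m+2) + E3*b^(m+1) + E4*b^m := by
          rw [pow_add, qb]; ring
        have ec : c^(m+4) = E2*c^(m+2) + E3*c^(m+1) + E4*c^m := by
          rw [pow_add, qc]; ring
        have ed : (a+b+c)^(m+4) = E2*(a+b+c)^(m+2) + E3*(a+b+c)^(m+1) + E4*(a+b+c)^m := by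
          rw [pow_add, qd]; ring
        rw [ea, eb, ec, ed]; ring
      rw [key]
      exact dvd_add (dvd_add ((ih (m+2) (by omega)).mul_left E2)
        ((ih (m+1) (by omega)).mul_left E3)) ((ih m (by omega)).mul_left E4)

theorem stmt_3 (K : Type*) [Field K] [CharP K 2] (f : Polynomial K) :
    ((X 0 + X 1) * (X 1 + X 2) * (X 0 + X 2) : MvPolynomial (Fin 3) K) ∣
      (Polynomial.aeval (X 0 : MvPolynomial (Fin 3) K) f + Polynomial.aeval (X 1) f +
        Polynomial.aeval (X 2) f + Polynomial.aeval (X 0 + X 1 + X 2) f) := by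
  induction f using Polynomial.induction_on' with
  | add p q hp hq =>
    simp only [map_add]
    have := dvd_add hp hq
    convert this using 1
    ring
  | monomial n k =>
    simp only [Polynomial.aeval_monomial]
    have h := aux2 K (n := n)
    have : (algebraMap K (MvPolynomial (Fin 3) K) k) * (X 0)^n
        + (algebraMap K (MvPolynomial (Fin 3) K) k) * (X 1)^n
        + (algebraMap K (MvPolynomial (Fin 3) K) k) * (X 2)^n
        + (algebraMap K (MvPolynomial (Fin 3) K) k) * (X 0 + X 1 + X 2)^n
        = (algebraMap K (MvPolynomial (Fin 3) K) k) *
          ((X 0)^n + (X 1)^n + (X 2)^n + (X 0 + X 1 + X 2)^n) := by ring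
    rw [this]
    exact h.mul_left _
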